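/- For all positive integers a and k, the Bernoulli numbers satisfy ((2^{k+1} - 1)/(k+1)) · B_{k+1} = Σ_{n=0}^{a-1} (-1)^n (n+1)^k + ((-1)^a / 2) · a^k + (-1)^a · Σ_{j=1}^{k} (k choose j) · a^{k-j} · ((2^{j+1} - 1)/(j+1)) · B_{j+1}. -/

import Mathlib

open Finset Nat PowerSeries

lemma sum_choose_two_pow_bernoulli (n : ℕ) :
    ∑ i ∈ range (n + 1), (n.choose i : ℚ) * 2 ^ i * bernoulli i
      = (2 - 2 ^ n) * bernoulli n := by
  have hne : ∀ m : ℕ, (m ! : ℚ) ≠ 0 := fun m => mod_cast factorial_ne_zero m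
  have hexp : exp ℚ - 1 ≠ 0 := by
    simp only [exp, PowerSeries.ext_iff, Ne, not_forall]
    use 1
    simp [factorial_ne_zero]
  have key : rescale (2 : ℚ) (bernoulliPowerSeries ℚ) * (exp ℚ + 1) =
      C (2 : ℚ) * bernoulliPowerSeries ℚ := by
    apply mul_right_cancel₀ hexp
    have h2 : (exp ℚ + 1) * (exp ℚ - 1) = exp ℚ ^ 2 - 1 := by ring
    rw [mul_assoc, h2]
    have h3 : exp ℚ ^ 2 - 1 = rescale (2 : ℚ) (exp ℚ - 1) := by
      rw [map_sub, map_one, show (2:ℚ) = ((2:ℕ):ℚ) by norm_num, ← exp_pow_eq_rescale_exp]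
    rw [h3, ← map_mul, bernoulliPowerSeries_mul_exp_sub_one, rescale_X, mul_assoc,
      bernoulliPowerSeries_mul_exp_sub_one]
  have hc := PowerSeries.ext_iff.mp key n
  rw [mul_add, mul_one, map_add] at hc
  simp only [coeff_C_mul] at hc
  simp only [coeff_mul, coeff_rescale, bernoulliPowerSeries, coeff_mk, coeff_exp,
    Algebra.algebraMap_self, RingHom.id_apply,
    sum_antidiagonal_eq_sum_range_succ_mk] at hc
  -- hc : ∑ i ∈ range (n+1), 2^i * (bernoulli i / i!) * (1/(n-i)!) + 2^n * (bernoulli n / n!)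
  --        = 2 * (bernoulli n / n!)
  have h4 : ∑ i ∈ range (n + 1), (n.choose i : ℚ) * 2 ^ i * bernoulli i
      = (n ! : ℚ) * ∑ i ∈ range (n + 1),
          2 ^ i * (bernoulli i / i !) * (1 / ((n - i)! : ℚ)) := by
    rw [mul_sum]
    refine sum_congr rfl fun i hi => ?_
    rw [Nat.cast_choose ℚ (mem_range_succ_iff.mp hi)]
    field_simp
  rw [h4, eq_sub_of_add_eq hc]
  field_simp

lemma bern_star (r : ℕ) (hr : 1 ≤ r) :
    ∑ j ∈ Icc 1 r, (r.choose j : ℚ) * ((2 ^ (j + 1) - 1) / (j + 1)) * bernoulli (j + 1)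
      = 1 / 2 - (2 ^ (r + 1) - 1 : ℚ) / (r + 1) * bernoulli (r + 1) := by
  have hr1 : ((r : ℚ) + 1) ≠ 0 := by positivity
  apply mul_left_cancel₀ hr1
  set G : ℕ → ℚ := fun i => ((r + 1).choose i : ℚ) * 2 ^ i * bernoulli i
      - ((r + 1).choose i : ℚ) * bernoulli i with hG
  have h1 : ∀ j ∈ Icc 1 r,
      ((r : ℚ) + 1) * ((r.choose j : ℚ) * ((2 ^ (j + 1) - 1) / (j + 1)) * bernoulli (j + 1))
        = G (j + 1) := by
    intro j _
    have hc : (((r + 1).choose (j + 1) : ℚ)) * ((j : ℚ) + 1)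
        = ((r : ℚ) + 1) * (r.choose j : ℚ) := by
      have := (Nat.add_one_mul_choose_eq r j).symm
      exact_mod_cast congrArg (Nat.cast : ℕ → ℚ) this
    have hj : ((j : ℚ) + 1) ≠ 0 := by positivity
    rw [hG]
    field_simp
    linear_combination (-((2 ^ (j + 1) - 1)) * bernoulli (j + 1)) * hc
  rw [mul_sum, sum_congr rfl h1]
  -- now compute ∑ j ∈ Icc 1 r, G (j+1)
  have h2 : ∑ j ∈ Icc 1 r, G (j + 1) = ∑ j ∈ range r, G (j + 2) := by
    rw [← Finset.Ico_add_one_right_eq_Icc, sum_Ico_eq_sum_range]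
    exact sum_congr (by norm_num) fun i _ => congrArg G (by omega)
  have h3 : ∑ i ∈ range (r + 2), G i = (∑ j ∈ range r, G (j + 2)) + G 1 + G 0 := by
    rw [sum_range_succ' G (r + 1), sum_range_succ' (fun i => G (i + 1)) r]
  have h4 : ∑ i ∈ range (r + 2), G i = (1 - 2 ^ (r + 1)) * bernoulli (r + 1) := by
    rw [hG, sum_sub_distrib]
    rw [sum_choose_two_pow_bernoulli (r + 1)]
    rw [sum_range_succ, sum_bernoulli (r + 1)]
    have : r + 1 ≠ 1 := by omega
    simp [this, show r ≠ 0 by omega]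
    ring
  have hG0 : G 0 = 0 := by simp [hG]
  have hG1 : G 1 = -((r : ℚ) + 1) / 2 := by
    simp [hG, bernoulli_one]
    ring
  have h5 : ∑ j ∈ Icc 1 r, G (j + 1)
      = (1 - 2 ^ (r + 1)) * bernoulli (r + 1) + ((r : ℚ) + 1) / 2 := by
    rw [h2]
    have := h3
    rw [h4, hG0, hG1] at this
    linarith
  rw [h5]
  field_simp
  ring

lemma choose_swap (k j m : ℕ) (hj : j ≤ k) (hm : m ≤ k) :
    k.choose j * (k - j).choose m = k.choose m * (k - m).choose j := by
  rcases le_or_gt (j + m) k with h | h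
  · have h1 := Nat.choose_mul (n := k) (Nat.le_add_right j m)
    have h2 := Nat.choose_mul (n := k) (Nat.le_add_left m j)
    have e1 : j + m - j = m := by omega
    have e2 : j + m - m = j := by omega
    rw [e1] at h1
    rw [e2] at h2
    have hsymm : (j + m).choose j = (j + m).choose m := by
      rw [← Nat.choose_symm (Nat.le_add_right j m), e1]
    rw [hsymm] at h1
    omega
  · have h1 : (k - j).choose m = 0 := Nat.choose_eq_zero_of_lt (by omega)
    have h2 : (k - m).choose j = 0 := Nat.choose_eq_zero_of_lt (by omega)
    simp [h1, h2]

noncomputable def dd (j : ℕ) : ℚ := ((2 ^ (j + 1) - 1) / (j + 1)) * bernoulli (j + 1)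

lemma bern_S (x k : ℕ) (hk : 1 ≤ k) :
    (∑ j ∈ Icc 1 k, (k.choose j : ℚ) * ((x : ℚ) + 1) ^ (k - j) * dd j)
      + (∑ j ∈ Icc 1 k, (k.choose j : ℚ) * (x : ℚ) ^ (k - j) * dd j)
      = (((x : ℚ) + 1) ^ k - (x : ℚ) ^ k) / 2 := by
  -- expand (x+1)^(k-j)
  have hexpand : ∀ j ∈ Icc 1 k,
      (k.choose j : ℚ) * ((x : ℚ) + 1) ^ (k - j) * dd j
        = ∑ m ∈ range (k + 1),
            (k.choose j : ℚ) * (((k - j).choose m : ℚ) * (x : ℚ) ^ m) * dd j := by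
    intro j hj
    have h1 : ((x : ℚ) + 1) ^ (k - j) = ∑ m ∈ range (k - j + 1),
        ((k - j).choose m : ℚ) * (x : ℚ) ^ m := by
      rw [add_pow]
      exact sum_congr rfl fun m _ => by ring
    have h2 : ∑ m ∈ range (k - j + 1), ((k - j).choose m : ℚ) * (x : ℚ) ^ m
        = ∑ m ∈ range (k + 1), ((k - j).choose m : ℚ) * (x : ℚ) ^ m := by
      apply sum_subset (range_subset_range.mpr (by omega))
      intro m _ hm
      have hlt : k - j < m := by
        simp only [mem_range, not_lt] at hm
        omega
      simp [Nat.choose_eq_zero_of_lt hlt]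
    rw [h1, h2, mul_sum, sum_mul]
  rw [sum_congr rfl hexpand, sum_comm]
  -- inner sum over j for fixed m
  have hinner : ∀ m ∈ range (k + 1),
      ∑ j ∈ Icc 1 k, (k.choose j : ℚ) * (((k - j).choose m : ℚ) * (x : ℚ) ^ m) * dd j
        = (k.choose m : ℚ) * (x : ℚ) ^ m *
            ∑ j ∈ Icc 1 (k - m), ((k - m).choose j : ℚ) * dd j := by
    intro m hm
    have hm' : m ≤ k := mem_range_succ_iff.mp hm
    have step1 : ∑ j ∈ Icc 1 k, (k.choose j : ℚ) * (((k - j).choose m : ℚ) * (x : ℚ) ^ m) * dd j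
        = ∑ j ∈ Icc 1 k, (k.choose m : ℚ) * (x : ℚ) ^ m * (((k - m).choose j : ℚ) * dd j) := by
      refine sum_congr rfl fun j hj => ?_
      have hj' : j ≤ k := (mem_Icc.mp hj).2
      have := choose_swap k j m hj' hm'
      have hcast : (k.choose j : ℚ) * ((k - j).choose m : ℚ)
          = (k.choose m : ℚ) * ((k - m).choose j : ℚ) := by exact_mod_cast this
      calc (k.choose j : ℚ) * (((k - j).choose m : ℚ) * (x : ℚ) ^ m) * dd j
          = ((k.choose j : ℚ) * ((k - j).choose m : ℚ)) * (x : ℚ) ^ m * dd j := by ring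
        _ = ((k.choose m : ℚ) * ((k - m).choose j : ℚ)) * (x : ℚ) ^ m * dd j := by rw [hcast]
        _ = (k.choose m : ℚ) * (x : ℚ) ^ m * (((k - m).choose j : ℚ) * dd j) := by ring
    rw [step1, ← mul_sum]
    congr 1
    symm
    apply sum_subset (Icc_subset_Icc_right (by omega))
    intro j hj hj'
    have : k - m < j := by
      simp only [mem_Icc] at hj hj'
      omega
    simp [Nat.choose_eq_zero_of_lt this]
  rw [sum_congr rfl hinner]
  -- star in dd form
  have star' : ∀ r : ℕ, 1 ≤ r →
      ∑ j ∈ Icc 1 r, (r.choose j : ℚ) * dd j = 1 / 2 - dd r := by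
    intro r hr
    have := bern_star r hr
    rw [show (∑ j ∈ Icc 1 r, (r.choose j : ℚ) * ((2 ^ (j + 1) - 1) / (j + 1)) * bernoulli (j + 1))
        = ∑ j ∈ Icc 1 r, (r.choose j : ℚ) * dd j from
      sum_congr rfl fun j _ => by rw [dd]; ring] at this
    rw [this, dd]
  -- first sum: last term vanishes, apply star'
  have hfirst : ∑ m ∈ range (k + 1), ((k.choose m : ℚ) * (x : ℚ) ^ m *
        ∑ j ∈ Icc 1 (k - m), ((k - m).choose j : ℚ) * dd j)
      = ∑ m ∈ range k, (k.choose m : ℚ) * (x : ℚ) ^ m * (1 / 2 - dd (k - m)) := by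
    rw [sum_range_succ]
    have hlast : (Icc 1 (k - k)) = ∅ := by simp
    rw [hlast]
    simp only [sum_empty, mul_zero, add_zero]
    refine sum_congr rfl fun m hm => ?_
    have hm' : m < k := mem_range.mp hm
    rw [star' (k - m) (by omega)]
  -- second sum: reindex
  have hsecond : ∑ j ∈ Icc 1 k, (k.choose j : ℚ) * (x : ℚ) ^ (k - j) * dd j
      = ∑ m ∈ range k, (k.choose m : ℚ) * (x : ℚ) ^ m * dd (k - m) := by
    rw [← Finset.Ico_add_one_right_eq_Icc, sum_Ico_eq_sum_range]
    rw [show k + 1 - 1 = k from rfl]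
    rw [← sum_range_reflect]
    refine sum_congr rfl fun m hm => ?_
    have hm' : m < k := mem_range.mp hm
    have e1 : 1 + (k - 1 - m) = k - m := by omega
    have e2 : k - (k - m) = m := by omega
    rw [e1, e2]
    have e3 : k.choose (k - m) = k.choose m := by
      rw [← Nat.choose_symm (by omega : m ≤ k)]
    rw [e3]
  rw [hfirst, hsecond, ← sum_add_distrib]
  have hpow : ((x : ℚ) + 1) ^ k = (∑ m ∈ range k, (k.choose m : ℚ) * (x : ℚ) ^ m) + (x : ℚ) ^ k := by
    rw [add_pow, sum_range_succ]
    simp only [Nat.choose_self, Nat.cast_one, one_mul, tsub_self, pow_zero, mul_one]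
    congr 1
    exact sum_congr rfl fun m _ => by ring
  rw [hpow, add_sub_cancel_right, sum_div]
  exact sum_congr rfl fun m _ => by ring

theorem bernoulli_recursion_general (a k : ℕ) (ha : 1 ≤ a) (hk : 1 ≤ k) :
    ((2 ^ (k + 1) - 1 : ℚ) / (k + 1)) * bernoulli (k + 1) =
      (∑ n ∈ Finset.range a, (-1 : ℚ) ^ n * ((n : ℚ) + 1) ^ k)
      + ((-1 : ℚ) ^ a / 2) * (a : ℚ) ^ k
      + (-1 : ℚ) ^ a * ∑ j ∈ Finset.Icc 1 k,
          (k.choose j : ℚ) * (a : ℚ) ^ (k - j) * ((2 ^ (j + 1) - 1) / (j + 1))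
            * bernoulli (j + 1) := by
  induction a, ha using Nat.le_induction with
  | base =>
    have hs := bern_star k hk
    simp only [Finset.sum_range_one, Nat.cast_zero, zero_add, one_pow, pow_one, Nat.cast_one,
      mul_one, pow_zero, one_mul]
    linear_combination hs
  | succ a ha ih =>
    rw [Finset.sum_range_succ, ih]
    have hS := bern_S a k hk
    have c1 : ∑ j ∈ Icc 1 k, (k.choose j : ℚ) * ((a : ℚ) + 1) ^ (k - j) * dd j
        = ∑ j ∈ Icc 1 k, (k.choose j : ℚ) * ((a : ℚ) + 1) ^ (k - j)
            * ((2 ^ (j + 1) - 1) / (j + 1)) * bernoulli (j + 1) :=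
      sum_congr rfl fun j _ => by rw [dd]; ring
    have c2 : ∑ j ∈ Icc 1 k, (k.choose j : ℚ) * (a : ℚ) ^ (k - j) * dd j
        = ∑ j ∈ Icc 1 k, (k.choose j : ℚ) * (a : ℚ) ^ (k - j)
            * ((2 ^ (j + 1) - 1) / (j + 1)) * bernoulli (j + 1) :=
      sum_congr rfl fun j _ => by rw [dd]; ring
    rw [c1, c2] at hS
    push_cast
    linear_combination ((-1 : ℚ) ^ a) * hS
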